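/- Let A be a linear operator on ℝ^{n×n} with ⟨Z, A(Z)⟩ ≥ 0 for all Z, such that A∘A ⪰ A in the sense that ⟨Z, (A∘A)(Z)⟩ ≥ ⟨Z, A(Z)⟩ for all Z. Suppose further P is an orthogonal projection onto a subspace T of ℝ^{n×n} with ‖P − P∘A∘P‖_{F→F} ≤ 1/2. Then for every H ∈ ℝ^{n×n}, ‖A(P(H))‖_F² ≥ (1/2)‖P(H)‖_F². -/

import Mathlib

open Matrix

/-- Frobenius inner product `⟨A,B⟩ = Tr(A Bᴴ)`. -/
def finner {n : ℕ} (A B : Matrix (Fin n) (Fin n) ℝ) : ℝ :=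
  Matrix.trace (A * Bᵀ)

/-- Frobenius norm. -/
noncomputable def frob {n : ℕ} (A : Matrix (Fin n) (Fin n) ℝ) : ℝ :=
  Real.sqrt (finner A A)

open scoped RealInnerProductSpace

/-- Key abstract lemma: if `⟨z, Az⟩ ≥ 0` and `⟨z, A(Az)⟩ ≥ ⟨z, Az⟩` for all `z`, then
`‖Ax‖² ≥ ⟨x, Ax⟩` for all `x`. -/
lemma key_ineq {E : Type*} [NormedAddCommGroup E] [InnerProductSpace ℝ E]
    [FiniteDimensional ℝ E] (A : E →ₗ[ℝ] E)
    (h1 : ∀ z, 0 ≤ ⟪z, A z⟫)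
    (h2 : ∀ z, ⟪z, A z⟫ ≤ ⟪z, A (A z)⟫) (x : E) :
    ⟪x, A x⟫ ≤ ‖A x‖ ^ 2 := by
  classical
  set S : E →ₗ[ℝ] E := (2⁻¹ : ℝ) • (A + LinearMap.adjoint A) with hSdef
  have hSapp : ∀ u v : E, ⟪S u, v⟫ = 2⁻¹ * (⟪A u, v⟫ + ⟪u, A v⟫) := by
    intro u v
    simp only [hSdef, LinearMap.smul_apply, LinearMap.add_apply,
      real_inner_smul_left, inner_add_left, LinearMap.adjoint_inner_left]
  have hSapp' : ∀ u v : E, ⟪u, S v⟫ = 2⁻¹ * (⟪u, A v⟫ + ⟪A u, v⟫) := by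
    intro u v
    simp only [hSdef, LinearMap.smul_apply, LinearMap.add_apply,
      real_inner_smul_right, inner_add_right, LinearMap.adjoint_inner_right]
  have hS : S.IsSymmetric := by
    intro u v
    rw [hSapp, hSapp']
    ring
  -- K = A - S, the skew part
  set K : E →ₗ[ℝ] E := A - S with hKdef
  have hAK : ∀ z, A z = S z + K z := by
    intro z; simp [hKdef]
  have hKskew : ∀ u v, ⟪u, K v⟫ = -⟪K u, v⟫ := by
    intro u v
    have e1 : ⟪u, K v⟫ = ⟪u, A v⟫ - ⟪u, S v⟫ := by
      simp [hKdef, inner_sub_right]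
    have e2 : ⟪K u, v⟫ = ⟪A u, v⟫ - ⟪S u, v⟫ := by
      simp [hKdef, inner_sub_left]
    rw [e1, e2, hSapp, hSapp']
    ring
  have hSA : ∀ z, ⟪z, S z⟫ = ⟪z, A z⟫ := by
    intro z
    rw [hSapp' z z, real_inner_comm z (A z)]
    ring
  -- the quadratic identity : ⟪z, A (A z)⟫ = ⟪S z, S z⟫ - ⟪K z, K z⟫
  have hquad : ∀ z, ⟪z, A (A z)⟫ = ⟪S z, S z⟫ - ⟪K z, K z⟫ := by
    intro z
    have e1 : ⟪z, A (A z)⟫ = ⟪S z, A z⟫ - ⟪K z, A z⟫ := by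
      rw [hAK (A z), inner_add_right, ← hS z (A z), hKskew z (A z)]
      ring
    have e2 : ⟪S z, A z⟫ = ⟪S z, S z⟫ + ⟪S z, K z⟫ := by
      rw [hAK z, inner_add_right]
    have e3 : ⟪K z, A z⟫ = ⟪K z, S z⟫ + ⟪K z, K z⟫ := by
      rw [hAK z, inner_add_right]
    have e4 : ⟪S z, K z⟫ = ⟪K z, S z⟫ := real_inner_comm _ _
    rw [e1, e2, e3]
    linarith [e4]
  have hKbound : ∀ z, ⟪K z, K z⟫ ≤ ⟪S z, S z⟫ - ⟪z, S z⟫ := by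
    intro z
    have h := h2 z
    rw [hquad z, ← hSA z] at h
    linarith
  -- spectral decomposition of S
  set N := Module.finrank ℝ E with hN
  have hn : Module.finrank ℝ E = N := rfl
  set b := hS.eigenvectorBasis hn with hb
  set μ := hS.eigenvalues hn with hμ
  have hSb : ∀ i, S (b i) = μ i • b i := fun i => hS.apply_eigenvectorBasis hn i
  have hbnorm : ∀ i, ⟪b i, b i⟫ = 1 := by
    intro i
    rw [real_inner_self_eq_norm_sq, b.orthonormal.1 i]
    norm_num
  have hμnonneg : ∀ i, 0 ≤ μ i := by
    intro i
    have h := h1 (b i)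
    rw [← hSA (b i), hSb i, real_inner_smul_right, hbnorm i] at h
    linarith
  have hKb : ∀ i, ⟪K (b i), K (b i)⟫ ≤ μ i ^ 2 - μ i := by
    intro i
    have h := hKbound (b i)
    rw [hSb i] at h
    simp only [real_inner_smul_left, real_inner_smul_right] at h
    rw [hbnorm i] at h
    nlinarith [h]
  -- if μ i ≤ 1 then K (b i) = 0 and μ i ^ 2 = μ i
  have hsmall : ∀ i, ¬ (1 < μ i) → K (b i) = 0 ∧ μ i ^ 2 = μ i := by
    intro i hi
    push_neg at hi
    have h0 : μ i ^ 2 - μ i ≤ 0 := by nlinarith [hμnonneg i]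
    have h1' : (0:ℝ) ≤ ⟪K (b i), K (b i)⟫ := real_inner_self_nonneg
    have h2' := hKb i
    constructor
    · have : ⟪K (b i), K (b i)⟫ = 0 := le_antisymm (by linarith) h1'
      exact inner_self_eq_zero.mp this
    · nlinarith
  -- coordinates
  set c : Fin N → ℝ := fun i => ⟪b i, x⟫ with hc
  set a : Fin N → ℝ := fun i => ⟪b i, A x⟫ with ha
  set k : Fin N → ℝ := fun i => ⟪b i, K x⟫ with hk
  have hai : ∀ i, a i = μ i * c i + k i := by
    intro i
    have hbs : ⟪b i, S x⟫ = μ i * c i := by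
      rw [← hS (b i) x, hSb i, real_inner_smul_left]
    simp only [ha, hc, hk] at *
    rw [hAK x, inner_add_right, hbs]
  have hksmall : ∀ i, ¬ (1 < μ i) → k i = 0 := by
    intro i hi
    have h0 := (hsmall i hi).1
    simp only [hk]
    rw [hKskew (b i) x, h0, inner_zero_left, neg_zero]
  -- Parseval
  have hPar1 : ⟪x, A x⟫ = ∑ i, c i * a i := by
    rw [← b.sum_inner_mul_inner x (A x)]
    exact Finset.sum_congr rfl fun i _ => by rw [real_inner_comm (b i) x]
  have hPar2 : ‖A x‖ ^ 2 = ∑ i, a i ^ 2 := by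
    rw [← real_inner_self_eq_norm_sq, ← b.sum_inner_mul_inner (A x) (A x)]
    exact Finset.sum_congr rfl fun i _ => by rw [real_inner_comm (b i) (A x)]; ring
  have hPar3 : (∑ i, c i * k i) = 0 := by
    have hx : ⟪x, K x⟫ = 0 := by
      have h := hKskew x x
      have h' := real_inner_comm x (K x)
      linarith
    rw [← hx, ← b.sum_inner_mul_inner x (K x)]
    exact Finset.sum_congr rfl fun i _ => by rw [real_inner_comm (b i) x]
  -- split the sums
  rw [hPar1, hPar2]
  rw [← Finset.sum_filter_add_sum_filter_not Finset.univ (fun i => 1 < μ i) (fun i => c i * a i),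
      ← Finset.sum_filter_add_sum_filter_not Finset.univ (fun i => 1 < μ i) (fun i => a i ^ 2)]
  have heq2 : ∑ i ∈ Finset.univ.filter (fun i => ¬ (1 < μ i)), c i * a i
      = ∑ i ∈ Finset.univ.filter (fun i => ¬ (1 < μ i)), a i ^ 2 := by
    apply Finset.sum_congr rfl
    intro i hi
    rw [Finset.mem_filter] at hi
    have hk0 := hksmall i hi.2
    have hμ2 := (hsmall i hi.2).2
    have hmc : μ i ^ 2 * c i ^ 2 = μ i * c i ^ 2 := by rw [hμ2]
    rw [hai i, hk0, add_zero]
    nlinarith [hmc]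
  -- big part: Cauchy-Schwarz
  set s := Finset.univ.filter (fun i => 1 < μ i) with hs
  have hka : ∑ i ∈ s, c i * k i = 0 := by
    rw [← Finset.sum_filter_add_sum_filter_not Finset.univ (fun i => 1 < μ i)
      (fun i => c i * k i)] at hPar3
    have hz : ∑ i ∈ Finset.univ.filter (fun i => ¬ (1 < μ i)), c i * k i = 0 := by
      apply Finset.sum_eq_zero
      intro i hi
      rw [Finset.mem_filter] at hi
      rw [hksmall i hi.2]
      ring
    rw [hz, add_zero] at hPar3
    exact hPar3
  have hbig : ∑ i ∈ s, c i * a i ≤ ∑ i ∈ s, a i ^ 2 := by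
    have hts : ∑ i ∈ s, c i * a i = ∑ i ∈ s, μ i * c i ^ 2 := by
      have hterm : ∀ i ∈ s, c i * a i = μ i * c i ^ 2 + c i * k i := by
        intro i _
        rw [hai i]; ring
      rw [Finset.sum_congr rfl hterm, Finset.sum_add_distrib, hka, add_zero]
    have hCS := Finset.sum_mul_sq_le_sq_mul_sq s c a
    have hcle : ∑ i ∈ s, c i ^ 2 ≤ ∑ i ∈ s, μ i * c i ^ 2 := by
      apply Finset.sum_le_sum
      intro i hi
      rw [hs, Finset.mem_filter] at hi
      nlinarith [sq_nonneg (c i), hi.2]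
    have htnonneg : 0 ≤ ∑ i ∈ s, μ i * c i ^ 2 := by
      apply Finset.sum_nonneg
      intro i hi
      rw [hs, Finset.mem_filter] at hi
      nlinarith [sq_nonneg (c i), hi.2]
    have hanonneg : (0:ℝ) ≤ ∑ i ∈ s, a i ^ 2 :=
      Finset.sum_nonneg fun i _ => sq_nonneg _
    rcases eq_or_lt_of_le (le_trans htnonneg (le_of_eq hts.symm)) with h0 | h0
    · rw [← h0]
      exact hanonneg
    · nlinarith [hCS, hcle, hts, hanonneg, h0]
  linarith [heq2, hbig]

theorem stmt9 (n : ℕ)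
    (A P : Matrix (Fin n) (Fin n) ℝ →ₗ[ℝ] Matrix (Fin n) (Fin n) ℝ)
    (T : Submodule ℝ (Matrix (Fin n) (Fin n) ℝ))
    (hApos : ∀ Z, 0 ≤ finner Z (A Z))
    (hAA : ∀ Z, finner Z (A Z) ≤ finner Z (A (A Z)))
    (hPidem : ∀ Z, P (P Z) = P Z)
    (hPsa : ∀ Z W, finner (P Z) W = finner Z (P W))
    (hPrange : LinearMap.range P = T)
    (hcontr : ∀ Z, frob (P Z - P (A (P Z))) ≤ (1/2) * frob Z)
    (H : Matrix (Fin n) (Fin n) ℝ) :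
    (1/2) * frob (P H)^2 ≤ frob (A (P H))^2 := by
  classical
  -- transport to EuclideanSpace
  set e : Matrix (Fin n) (Fin n) ℝ ≃ₗ[ℝ] EuclideanSpace ℝ (Fin n × Fin n) :=
    (LinearEquiv.curry ℝ ℝ (Fin n) (Fin n)).symm.trans
      (WithLp.linearEquiv 2 ℝ (Fin n × Fin n → ℝ)).symm with he
  have hinner : ∀ X Y : Matrix (Fin n) (Fin n) ℝ, ⟪e X, e Y⟫ = finner X Y := by
    intro X Y
    simp only [finner, Matrix.trace, Matrix.diag, Matrix.mul_apply, Matrix.transpose_apply]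
    rw [PiLp.inner_apply]
    simp only [RCLike.inner_apply, conj_trivial]
    rw [← Finset.sum_product']
    exact Finset.sum_congr rfl fun x _ => mul_comm _ _
  have hfrob : ∀ X : Matrix (Fin n) (Fin n) ℝ, frob X = ‖e X‖ := by
    intro X
    rw [frob, ← hinner X X, real_inner_self_eq_norm_sq, Real.sqrt_sq (norm_nonneg _)]
  set Ahat : EuclideanSpace ℝ (Fin n × Fin n) →ₗ[ℝ] EuclideanSpace ℝ (Fin n × Fin n) :=
    e.conj A with hAhat
  have hA : ∀ X, Ahat (e X) = e (A X) := by
    intro X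
    simp [hAhat, LinearEquiv.conj_apply]
  have h1 : ∀ z, 0 ≤ ⟪z, Ahat z⟫ := by
    intro z
    have hz : z = e (e.symm z) := (e.apply_symm_apply z).symm
    rw [hz, hA, hinner]
    exact hApos _
  have h2 : ∀ z, ⟪z, Ahat z⟫ ≤ ⟪z, Ahat (Ahat z)⟫ := by
    intro z
    have hz : z = e (e.symm z) := (e.apply_symm_apply z).symm
    rw [hz, hA, hA, hinner, hinner]
    exact hAA _
  have hPM : P (P H) = P H := hPidem H
  -- finner (P H) (A (P H)) = finner (P H) (P (A (P H)))
  have hMA : ⟪e (P H), e (A (P H))⟫ = ⟪e (P H), e (P (A (P H)))⟫ := by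
    rw [hinner, hinner]
    rw [hPsa H (A (P H)), hPsa H (P (A (P H))), hPidem]
  -- contraction bound
  have hconM : ‖e (P H) - e (P (A (P H)))‖ ≤ (1/2) * ‖e (P H)‖ := by
    have h := hcontr (P H)
    rw [hPM] at h
    rw [hfrob, hfrob, map_sub] at h
    exact h
  have hlow : (1/2) * ‖e (P H)‖ ^ 2 ≤ ⟪e (P H), e (P (A (P H)))⟫ := by
    set m := e (P H)
    set w := e (P (A (P H)))
    have hsub : ⟪m, m - w⟫ = ⟪m, m⟫ - ⟪m, w⟫ := inner_sub_right m m w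
    have hcs : ⟪m, m - w⟫ ≤ ‖m‖ * ‖m - w‖ := real_inner_le_norm m (m - w)
    have hself : ⟪m, m⟫ = ‖m‖ ^ 2 := real_inner_self_eq_norm_sq m
    have hmul : ‖m‖ * ‖m - w‖ ≤ ‖m‖ * ((1/2) * ‖m‖) :=
      mul_le_mul_of_nonneg_left hconM (norm_nonneg m)
    nlinarith [hsub, hcs, hself, hmul]
  have hkey := key_ineq Ahat h1 h2 (e (P H))
  rw [hA] at hkey
  rw [hMA] at hkey
  calc (1/2) * frob (P H) ^ 2 = (1/2) * ‖e (P H)‖ ^ 2 := by rw [hfrob]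
    _ ≤ ⟪e (P H), e (P (A (P H)))⟫ := hlow
    _ ≤ ‖e (A (P H))‖ ^ 2 := hkey
    _ = frob (A (P H)) ^ 2 := by rw [hfrob]
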